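/- arXiv:1903.11476 — 3 statements merged into one kernel-verified Lean document; each statement's English description precedes it below -/
import Mathlib

section
/- Let E be a real vector space, let C ⊆ E be a nonempty convex set, let N ≥ 1, and let D = {x : Fin N → E | ∀ i, x i ∈ C}. Suppose J : (Fin N → E) → ℝ is convex on D and exchangeable (J(x ∘ σ) = J(x) for every permutation σ of Fin N and every x ∈ D). Then the infimum of J over D equals the infimum of J over constant tuples: inf_{x ∈ D} J(x) = inf_{c ∈ C} J(c, …, c). In particular, if J attains its infimum on D at some x* ∈ D, then it also attains its infimum at the constant tuple all of whose coordinates equal (1/N) ∑_i x* i; i.e., an identically symmetric optimal policy exists. -/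
/-- Theorem 3.1(ii), symmetrically optimal teams: for a convex exchangeable team cost
functional, the infimum over all profiles equals the infimum over identically symmetric
(constant) profiles, and if an optimal profile exists then the constant profile with value
the average of the optimal profile is also optimal. -/
theorem symmetrically_optimal_of_convex_exchangeable
    {E : Type*} [AddCommGroup E] [Module ℝ E]
    (C : Set E) (hCne : C.Nonempty) (hC : Convex ℝ C)
    (N : ℕ) (hN : 1 ≤ N)
    (D : Set (Fin N → E)) (hD : D = {x : Fin N → E | ∀ i, x i ∈ C})
    (J : (Fin N → E) → ℝ)
    (hconv : ∀ x ∈ D, ∀ y ∈ D, ∀ α : ℝ, α ∈ Set.Icc (0:ℝ) 1 →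
      J (α • x + (1 - α) • y) ≤ α * J x + (1 - α) * J y)
    (hexch : ∀ (σ : Equiv.Perm (Fin N)), ∀ x ∈ D, J (x ∘ σ) = J x) :
    sInf (J '' D) = sInf ((fun c : E => J (fun _ : Fin N => c)) '' C) ∧
    ∀ xstar ∈ D, (∀ y ∈ D, J xstar ≤ J y) →
      ((fun _ : Fin N => (N : ℝ)⁻¹ • ∑ i, xstar i) ∈ D ∧
        ∀ y ∈ D, J (fun _ : Fin N => (N : ℝ)⁻¹ • ∑ i, xstar i) ≤ J y) := by
  haveI : NeZero N := ⟨by omega⟩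
  have hNne : (N : ℝ) ≠ 0 := Nat.cast_ne_zero.mpr (by omega)
  -- D is convex
  have hDconv : Convex ℝ D := by
    rw [hD]
    intro x hx y hy a b ha hb hab
    intro i
    exact hC (hx i) (hy i) ha hb hab
  have hcf : ConvexOn ℝ D J := by
    refine ⟨hDconv, fun x hx y hy a b ha hb hab => ?_⟩
    have h := hconv x hx y hy a ⟨ha, by linarith⟩
    have hb' : b = 1 - a := by linarith
    rw [hb']
    exact h
  -- key lemma: the averaged constant profile is in D and J of it is ≤ J x
  have key : ∀ x ∈ D, ((fun _ : Fin N => (N : ℝ)⁻¹ • ∑ i, x i) ∈ D ∧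
      J (fun _ : Fin N => (N : ℝ)⁻¹ • ∑ i, x i) ≤ J x) := by
    intro x hx
    have hxC : ∀ i, x i ∈ C := by rw [hD] at hx; exact hx
    have hmem : (fun _ : Fin N => (N : ℝ)⁻¹ • ∑ i, x i) ∈ D := by
      rw [hD]
      intro _
      rw [Finset.smul_sum]
      refine hC.sum_mem (fun i _ => by positivity) ?_ (fun i _ => hxC i)
      simp [Finset.sum_const, hNne]
    refine ⟨hmem, ?_⟩
    -- write the constant profile as a convex combination of shifted profiles
    have hrepr : (fun _ : Fin N => (N : ℝ)⁻¹ • ∑ i, x i)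
        = ∑ k : Fin N, (N : ℝ)⁻¹ • (x ∘ (Equiv.addLeft k : Equiv.Perm (Fin N))) := by
      funext j
      have hsum : ∑ k : Fin N, x (k + j) = ∑ i, x i :=
        Fintype.sum_equiv (Equiv.addRight j) (fun k => x (k + j)) x (fun k => rfl)
      simp only [Finset.sum_apply, Pi.smul_apply, Function.comp_apply,
        Equiv.coe_addLeft]
      rw [← Finset.smul_sum, hsum]
    have hshiftD : ∀ k : Fin N, x ∘ (Equiv.addLeft k : Equiv.Perm (Fin N)) ∈ D := by
      intro k
      rw [hD]
      intro i
      exact hxC _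
    have hJ := hcf.map_sum_le (t := Finset.univ) (w := fun _ : Fin N => (N : ℝ)⁻¹)
      (p := fun k : Fin N => x ∘ (Equiv.addLeft k : Equiv.Perm (Fin N)))
      (fun i _ => by positivity) (by simp [Finset.sum_const, hNne]) (fun k _ => hshiftD k)
    rw [hrepr]
    calc J (∑ k : Fin N, (N : ℝ)⁻¹ • (x ∘ (Equiv.addLeft k : Equiv.Perm (Fin N))))
        ≤ ∑ k : Fin N, (N : ℝ)⁻¹ * J (x ∘ (Equiv.addLeft k : Equiv.Perm (Fin N))) := hJ
      _ = ∑ k : Fin N, (N : ℝ)⁻¹ * J x := by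
          refine Finset.sum_congr rfl (fun k _ => ?_)
          rw [hexch _ x hx]
      _ = J x := by
          rw [Finset.sum_const, Finset.card_univ, Fintype.card_fin, nsmul_eq_mul]
          field_simp
  -- constant profiles are in D
  have hconstD : ∀ c ∈ C, (fun _ : Fin N => c) ∈ D := by
    intro c hc; rw [hD]; intro _; exact hc
  -- the constant-image set is a subset of the full image
  have hsub : ((fun c : E => J (fun _ : Fin N => c)) '' C) ⊆ J '' D := by
    rintro _ ⟨c, hc, rfl⟩
    exact Set.mem_image_of_mem J (hconstD c hc)
  -- every value in J '' D dominates some value in the constant image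
  have hdom : ∀ a ∈ J '' D, ∃ b ∈ ((fun c : E => J (fun _ : Fin N => c)) '' C), b ≤ a := by
    rintro _ ⟨x, hx, rfl⟩
    obtain ⟨hmem, hle⟩ := key x hx
    have hcC : (N : ℝ)⁻¹ • ∑ i, x i ∈ C := by rw [hD] at hmem; exact hmem ⟨0, by omega⟩
    exact ⟨_, ⟨_, hcC, rfl⟩, hle⟩
  have hAne : (J '' D).Nonempty := by
    obtain ⟨c, hc⟩ := hCne
    exact ⟨_, Set.mem_image_of_mem J (hconstD c hc)⟩
  have hBne : ((fun c : E => J (fun _ : Fin N => c)) '' C).Nonempty :=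
    hCne.image _
  constructor
  · by_cases hbdd : BddBelow (J '' D)
    · refine le_antisymm (csInf_le_csInf hbdd hBne hsub) ?_
      refine le_csInf hAne (fun a ha => ?_)
      obtain ⟨b, hb, hba⟩ := hdom a ha
      exact le_trans (csInf_le (hbdd.mono hsub) hb) hba
    · have hbdd' : ¬ BddBelow ((fun c : E => J (fun _ : Fin N => c)) '' C) := by
        intro ⟨m, hm⟩
        exact hbdd ⟨m, fun a ha => by
          obtain ⟨b, hb, hba⟩ := hdom a ha
          exact le_trans (hm hb) hba⟩
      rw [Real.sInf_of_not_bddBelow hbdd, Real.sInf_of_not_bddBelow hbdd']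
  · intro xstar hxs hopt
    obtain ⟨hmem, hle⟩ := key xstar hxs
    exact ⟨hmem, fun y hy => le_trans hle (hopt y hy)⟩
end

section
/- Let Ω, Y, U be measurable (standard Borel) spaces and N ≥ 1. Let μ be an exchangeable probability measure on Ω^N (invariant under every coordinate-permutation map), let κ be a Markov (probability) kernel from Ω to Y, and let c : Ω^N × U^N → [0,∞] be measurable with c(ω ∘ σ, u ∘ σ) = c(ω, u) for all permutations σ. For a profile of measurable policies γ : Fin N → (Y → U), define J(γ) = ∫_{Ω^N} ∫_{Y^N} c(ω, (γ i (y i))_i) d(⊗_{i} κ(ω_i))(y) dμ(ω), where ⊗_i κ(ω_i) is the product of the measures κ(ω_1), …, κ(ω_N). Then J(γ ∘ σ) = J(γ) for every permutation σ of Fin N. -/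
open MeasureTheory
open scoped ENNReal

section Aux

variable {Ω Y : Type*} [MeasurableSpace Ω] [MeasurableSpace Y] {N : ℕ}

/-- The product kernel `ω ↦ ⊗ᵢ κ (ω i)` as a Markov kernel. -/
noncomputable def piKernel (κ : ProbabilityTheory.Kernel Ω Y)
    [ProbabilityTheory.IsMarkovKernel κ] (N : ℕ) :
    ProbabilityTheory.Kernel (Fin N → Ω) (Fin N → Y) where
  toFun := fun ω => Measure.pi (fun i => κ (ω i))
  measurable' := by
    refine Measure.measurable_of_measurable_coe _ ?_
    intro s hs
    refine MeasurableSpace.induction_on_inter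
      (C := fun t _ => Measurable fun ω : Fin N → Ω => Measure.pi (fun i => κ (ω i)) t)
      generateFrom_pi.symm isPiSystem_pi (by simp) ?_ ?_ ?_ s hs
    · intro t ht
      obtain ⟨t, ht, rfl⟩ := ht
      simp only [Set.mem_pi, Set.mem_univ, forall_true_left] at ht
      have : (fun ω : Fin N → Ω => Measure.pi (fun i => κ (ω i)) (Set.pi Set.univ t))
          = fun ω => ∏ i, κ (ω i) (t i) := by
        funext ω
        exact Measure.pi_pi _ _
      rw [this]
      exact Finset.measurable_prod _ fun i _ =>
        (κ.measurable_coe (ht i)).comp (measurable_pi_apply i)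
    · intro t htm ih
      have : (fun ω : Fin N → Ω => Measure.pi (fun i => κ (ω i)) tᶜ)
          = fun ω => 1 - Measure.pi (fun i => κ (ω i)) t := by
        funext ω
        have : IsProbabilityMeasure (Measure.pi (fun i => κ (ω i))) := by infer_instance
        rw [measure_compl htm (measure_ne_top _ t), measure_univ]
      rw [this]
      exact Measurable.const_sub ih 1
    · intro f hfd hfm ih
      have : (fun ω : Fin N → Ω => Measure.pi (fun i => κ (ω i)) (⋃ n, f n))
          = fun ω => ∑' n, Measure.pi (fun i => κ (ω i)) (f n) := by
        funext ω
        exact measure_iUnion hfd hfm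
      rw [this]
      exact Measurable.ennreal_tsum ih

instance piKernel_isMarkov (κ : ProbabilityTheory.Kernel Ω Y)
    [ProbabilityTheory.IsMarkovKernel κ] (N : ℕ) :
    ProbabilityTheory.IsMarkovKernel (piKernel κ N) :=
  ⟨fun ω => by
    show IsProbabilityMeasure (Measure.pi (fun i => κ (ω i)))
    infer_instance⟩

lemma piKernel_apply (κ : ProbabilityTheory.Kernel Ω Y)
    [ProbabilityTheory.IsMarkovKernel κ] (N : ℕ) (ω : Fin N → Ω) :
    piKernel κ N ω = Measure.pi (fun i => κ (ω i)) := rfl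

/-- Push-forward of a finite product of probability measures under a permutation of
coordinates. -/
lemma pi_map_comp_perm (ν : Fin N → Measure Y) [∀ i, IsProbabilityMeasure (ν i)]
    (σ : Equiv.Perm (Fin N)) :
    (Measure.pi ν).map (fun y : Fin N → Y => y ∘ σ) = Measure.pi (fun i => ν (σ i)) := by
  have hm : Measurable (fun y : Fin N → Y => y ∘ σ) :=
    measurable_pi_lambda _ fun i => measurable_pi_apply (σ i)
  refine (Measure.pi_eq fun s hs => ?_).symm
  rw [Measure.map_apply hm (MeasurableSet.univ_pi fun i => hs i)]
  have hpre : (fun y : Fin N → Y => y ∘ σ) ⁻¹' (Set.pi Set.univ s)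
      = Set.pi Set.univ (fun j => s (σ.symm j)) := by
    ext y
    simp only [Set.mem_preimage, Set.mem_pi, Set.mem_univ, forall_true_left, Function.comp]
    constructor
    · intro h j; have := h (σ.symm j); simpa using this
    · intro h i; have := h (σ i); simpa using this
  rw [hpre, Measure.pi_pi]
  exact Fintype.prod_equiv σ.symm _ _ fun j => by simp

end Aux

/-- Theorem 3.1(i), kernel form: under the conditional independence condition where each
decision maker's observation is generated from its own coordinate of an exchangeable
primitive random vector through the same observation channel `κ`, the expected cost is
invariant under permutations of the policy profile. -/
theorem team_exchangeable_kernel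
    {Ω Y U : Type*} [MeasurableSpace Ω] [MeasurableSpace Y] [MeasurableSpace U]
    (N : ℕ) (hN : 1 ≤ N)
    (μ : Measure (Fin N → Ω)) [IsProbabilityMeasure μ]
    (hexch : ∀ σ : Equiv.Perm (Fin N),
      Measure.map (fun ω : Fin N → Ω => ω ∘ σ) μ = μ)
    (κ : ProbabilityTheory.Kernel Ω Y) [ProbabilityTheory.IsMarkovKernel κ]
    (c : (Fin N → Ω) → (Fin N → U) → ℝ≥0∞)
    (hc : Measurable (fun p : (Fin N → Ω) × (Fin N → U) => c p.1 p.2))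
    (hcinv : ∀ (σ : Equiv.Perm (Fin N)) (ω : Fin N → Ω) (u : Fin N → U),
      c (ω ∘ σ) (u ∘ σ) = c ω u)
    (γ : Fin N → Y → U) (hγ : ∀ i, Measurable (γ i)) :
    ∀ σ : Equiv.Perm (Fin N),
      ∫⁻ ω, ∫⁻ y, c ω (fun i => γ (σ i) (y i)) ∂(Measure.pi fun i => κ (ω i)) ∂μ
        = ∫⁻ ω, ∫⁻ y, c ω (fun i => γ i (y i)) ∂(Measure.pi fun i => κ (ω i)) ∂μ := by
  intro σ
  -- measurability of the inner integrand (uncurried), for any policy profile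
  have hmeas_f : ∀ δ : Fin N → Y → U,
      (∀ i, Measurable (δ i)) →
      Measurable (fun p : (Fin N → Ω) × (Fin N → Y) => c p.1 (fun i => δ i (p.2 i))) := by
    intro δ hδ
    exact hc.comp (measurable_fst.prodMk
      (measurable_pi_lambda _ fun i => (hδ i).comp ((measurable_pi_apply i).comp measurable_snd)))
  have hcomp_meas : Measurable (fun ω : Fin N → Ω => ω ∘ σ) :=
    measurable_pi_lambda _ fun i => measurable_pi_apply (σ i)
  -- the LHS outer integrand, as integral against the product kernel
  have hF : Measurable (fun ω : Fin N → Ω =>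
      ∫⁻ y, c ω (fun i => γ (σ i) (y i)) ∂(piKernel κ N ω)) :=
    Measurable.lintegral_kernel_prod_right (hmeas_f (fun i => γ (σ i)) (fun i => hγ (σ i)))
  calc
    ∫⁻ ω, ∫⁻ y, c ω (fun i => γ (σ i) (y i)) ∂(Measure.pi fun i => κ (ω i)) ∂μ
        = ∫⁻ ω, (fun ω => ∫⁻ y, c ω (fun i => γ (σ i) (y i)) ∂(piKernel κ N ω)) ω
            ∂(Measure.map (fun ω : Fin N → Ω => ω ∘ σ) μ) := by
          rw [hexch σ]; rfl
    _ = ∫⁻ ω, ∫⁻ y, c (ω ∘ σ) (fun i => γ (σ i) (y i))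
            ∂(Measure.pi fun i => κ ((ω ∘ σ) i)) ∂μ := by
          rw [lintegral_map hF hcomp_meas]; rfl
    _ = ∫⁻ ω, ∫⁻ y, c ω (fun i => γ i (y i)) ∂(Measure.pi fun i => κ (ω i)) ∂μ := by
          refine lintegral_congr fun ω => ?_
          have hpi : (Measure.pi fun i => κ ((ω ∘ σ) i))
              = (Measure.pi fun i => κ (ω i)).map (fun y : Fin N → Y => y ∘ σ) :=
            (pi_map_comp_perm (fun i => κ (ω i)) σ).symm
          have hg : Measurable fun y : Fin N → Y => c (ω ∘ σ) fun i => γ (σ i) (y i) :=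
            hc.comp ((measurable_const (a := ω ∘ σ)).prodMk
              (measurable_pi_lambda _ fun i => (hγ (σ i)).comp (measurable_pi_apply i)))
          rw [hpi, lintegral_map hg
            (measurable_pi_lambda _ fun i => measurable_pi_apply (σ i))]
          refine lintegral_congr fun y => ?_
          have : (fun i => γ (σ i) ((y ∘ σ) i)) = (fun j => γ j (y j)) ∘ σ := rfl
          rw [this, hcinv σ ω (fun j => γ j (y j))]
end

section
/- In the mean-field N-DM team setup (decoupled dynamics x_{t+1}^i = f_t(x_t^i, u_t^i, w_t^i), observations y_t^i = h_t(x_{0:t}^i, u_{0:t−1}^i, v_{0:t}^i) identical across i, actions u_t^i = γ_t^i(y_t^i), cost J^N(γ) = (1/N) ∑_{t<T} ∑_{i≤N} E[c(x_t^i, u_t^i, (1/N)∑_p u_t^p, (1/N)∑_p x_t^p)]), assume: the action space U ⊆ ℝ^m is compact and convex; c is continuous and nonnegative; f_t and h_t are continuous in the state and action arguments; (x_0^1,…,x_0^N) are exchangeable zero-mean random vectors with identical distribution; for each t the noises {w_t^i}_i and {v_t^i}_i are i.i.d. zero-mean, mutually independent across time, independent of each other and of the initial states; and J^N is convex on the (convex)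 set of measurable policy profiles with finite cost. Then the team is symmetrically optimal: for every measurable policy profile γ with finite cost there exists a single measurable policy γ̃ = (γ̃_t)_t such that the profile in which every DM uses γ̃ satisfies J^N(γ̃, …, γ̃) ≤ J^N(γ). -/
open MeasureTheory
open scoped ENNReal

namespace MeanFieldTeam5

variable {Y : Type*} {W V : Type}

/-- Joint state/action history of a single decision maker up to time `t`:
`x_{t+1} = f t (x_t, u_t, w_t)`, `y_t = h t (x_{0:t}, u_{0:t-1}, v_{0:t})`,
`u_t = g t y_t`. -/
def hist {n m : ℕ}
    (f : ℕ → (Fin n → ℝ) → (Fin m → ℝ) → W → (Fin n → ℝ))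
    (h : (t : ℕ) → (Fin (t + 1) → (Fin n → ℝ)) → (Fin t → (Fin m → ℝ)) →
      (Fin (t + 1) → V) → Y)
    (g : ℕ → Y → (Fin m → ℝ))
    (x0 : Fin n → ℝ) (wseq : ℕ → W) (vseq : ℕ → V) :
    (t : ℕ) → (Fin (t + 1) → (Fin n → ℝ)) × (Fin t → (Fin m → ℝ))
  | 0 => (fun _ => x0, Fin.elim0)
  | t + 1 =>
      let p := hist f h g x0 wseq vseq t
      let yt := h t p.1 p.2 (fun s => vseq s)
      let ut := g t yt
      (Fin.snoc p.1 (f t (p.1 (Fin.last t)) ut (wseq t)), Fin.snoc p.2 ut)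

/-- State of a single decision maker at time `t`. -/
def xAt {n m : ℕ} (f : ℕ → (Fin n → ℝ) → (Fin m → ℝ) → W → (Fin n → ℝ))
    (h : (t : ℕ) → (Fin (t + 1) → (Fin n → ℝ)) → (Fin t → (Fin m → ℝ)) →
      (Fin (t + 1) → V) → Y)
    (g : ℕ → Y → (Fin m → ℝ))
    (x0 : Fin n → ℝ) (wseq : ℕ → W) (vseq : ℕ → V) (t : ℕ) : Fin n → ℝ :=
  (hist f h g x0 wseq vseq t).1 (Fin.last t)

/-- Observation of a single decision maker at time `t`. -/
def yAt {n m : ℕ} (f : ℕ → (Fin n → ℝ) → (Fin m → ℝ) → W → (Fin n → ℝ))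
    (h : (t : ℕ) → (Fin (t + 1) → (Fin n → ℝ)) → (Fin t → (Fin m → ℝ)) →
      (Fin (t + 1) → V) → Y)
    (g : ℕ → Y → (Fin m → ℝ))
    (x0 : Fin n → ℝ) (wseq : ℕ → W) (vseq : ℕ → V) (t : ℕ) : Y :=
  h t (hist f h g x0 wseq vseq t).1 (hist f h g x0 wseq vseq t).2 (fun s => vseq s)

/-- Action of a single decision maker at time `t`. -/
def uAt {n m : ℕ} (f : ℕ → (Fin n → ℝ) → (Fin m → ℝ) → W → (Fin n → ℝ))
    (h : (t : ℕ) → (Fin (t + 1) → (Fin n → ℝ)) → (Fin t → (Fin m → ℝ)) →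
      (Fin (t + 1) → V) → Y)
    (g : ℕ → Y → (Fin m → ℝ))
    (x0 : Fin n → ℝ) (wseq : ℕ → W) (vseq : ℕ → V) (t : ℕ) : Fin m → ℝ :=
  g t (yAt f h g x0 wseq vseq t)

/-- The expected cost `J^N` of the `N`-decision-maker mean-field team over horizon `T`,
with nonnegative real-valued stage cost `c`. -/
noncomputable def mfCost {Ω : Type*} [MeasurableSpace Ω] (P : Measure Ω)
    {n m : ℕ} (N T : ℕ)
    (c : (Fin n → ℝ) → (Fin m → ℝ) → (Fin m → ℝ) → (Fin n → ℝ) → ℝ)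
    (f : ℕ → (Fin n → ℝ) → (Fin m → ℝ) → W → (Fin n → ℝ))
    (h : (t : ℕ) → (Fin (t + 1) → (Fin n → ℝ)) → (Fin t → (Fin m → ℝ)) →
      (Fin (t + 1) → V) → Y)
    (γ : Fin N → ℕ → Y → (Fin m → ℝ))
    (x0 : Fin N → Ω → (Fin n → ℝ))
    (w : Fin N → ℕ → Ω → W) (v : Fin N → ℕ → Ω → V) : ℝ≥0∞ :=
  (N : ℝ≥0∞)⁻¹ * ∑ t ∈ Finset.range T, ∑ i : Fin N, ∫⁻ ω,
    ENNReal.ofReal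
      (c (xAt f h (γ i) (x0 i ω) (fun s => w i s ω) (fun s => v i s ω) t)
        (uAt f h (γ i) (x0 i ω) (fun s => w i s ω) (fun s => v i s ω) t)
        ((N : ℝ)⁻¹ • ∑ p : Fin N,
          uAt f h (γ p) (x0 p ω) (fun s => w p s ω) (fun s => v p s ω) t)
        ((N : ℝ)⁻¹ • ∑ p : Fin N,
          xAt f h (γ p) (x0 p ω) (fun s => w p s ω) (fun s => v p s ω) t)) ∂P

/-- Index type for the joint independence hypothesis. -/
abbrev IdxType (N T : ℕ) : Type := Option ((Fin N × Fin T) ⊕ (Fin N × Fin T))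

/-- The space in which the random element indexed by `idx` takes its values. -/
def idxSpace (n N T : ℕ) (W V : Type) : IdxType N T → Type
  | none => Fin N → Fin n → ℝ
  | some (Sum.inl _) => W
  | some (Sum.inr _) => V

instance idxSpaceMeasurable (n N T : ℕ) (W V : Type) [MeasurableSpace W]
    [MeasurableSpace V] (idx : IdxType N T) : MeasurableSpace (idxSpace n N T W V idx) :=
  match idx with
  | none => inferInstanceAs (MeasurableSpace (Fin N → Fin n → ℝ))
  | some (Sum.inl _) => ‹MeasurableSpace W›
  | some (Sum.inr _) => ‹MeasurableSpace V›

/-- The family of primitive random elements: initial states and noises. -/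
def idxFun {Ω : Type*} (n N T : ℕ)
    (x0 : Fin N → Ω → (Fin n → ℝ))
    (w : Fin N → ℕ → Ω → W) (v : Fin N → ℕ → Ω → V) :
    (idx : IdxType N T) → Ω → idxSpace n N T W V idx
  | none => fun ω i => x0 i ω
  | some (Sum.inl (i, t)) => w i t
  | some (Sum.inr (i, t)) => v i t

/-! ### Auxiliary lemmas -/

section Aux

set_option linter.unusedSectionVars false

variable [MeasurableSpace Y] [MeasurableSpace W] [MeasurableSpace V] {n m : ℕ}

theorem hist_congr {f : ℕ → (Fin n → ℝ) → (Fin m → ℝ) → W → (Fin n → ℝ)}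
    {h : (t : ℕ) → (Fin (t + 1) → (Fin n → ℝ)) → (Fin t → (Fin m → ℝ)) →
      (Fin (t + 1) → V) → Y}
    {g : ℕ → Y → (Fin m → ℝ)} {x0 : Fin n → ℝ} {wseq wseq' : ℕ → W} {vseq vseq' : ℕ → V}
    (t : ℕ) (hw : ∀ s, s < t → wseq s = wseq' s) (hv : ∀ s, s < t → vseq s = vseq' s) :
    hist f h g x0 wseq vseq t = hist f h g x0 wseq' vseq' t := by
  induction t with
  | zero => rfl
  | succ t ih =>
    have hp := ih (fun s hs => hw s (hs.trans (Nat.lt_succ_self t)))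
      (fun s hs => hv s (hs.trans (Nat.lt_succ_self t)))
    have hv' : (fun s : Fin (t + 1) => vseq (s : ℕ)) = fun s : Fin (t + 1) => vseq' (s : ℕ) := by
      funext s; exact hv s s.isLt
    simp only [hist, hp, hv', hw t (Nat.lt_succ_self t)]

theorem xAt_congr {f : ℕ → (Fin n → ℝ) → (Fin m → ℝ) → W → (Fin n → ℝ)}
    {h : (t : ℕ) → (Fin (t + 1) → (Fin n → ℝ)) → (Fin t → (Fin m → ℝ)) →
      (Fin (t + 1) → V) → Y}
    {g : ℕ → Y → (Fin m → ℝ)} {x0 : Fin n → ℝ} {wseq wseq' : ℕ → W} {vseq vseq' : ℕ → V}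
    (t : ℕ) (hw : ∀ s, s < t → wseq s = wseq' s) (hv : ∀ s, s < t → vseq s = vseq' s) :
    xAt f h g x0 wseq vseq t = xAt f h g x0 wseq' vseq' t := by
  unfold xAt; rw [hist_congr t hw hv]

theorem uAt_congr {f : ℕ → (Fin n → ℝ) → (Fin m → ℝ) → W → (Fin n → ℝ)}
    {h : (t : ℕ) → (Fin (t + 1) → (Fin n → ℝ)) → (Fin t → (Fin m → ℝ)) →
      (Fin (t + 1) → V) → Y}
    {g : ℕ → Y → (Fin m → ℝ)} {x0 : Fin n → ℝ} {wseq wseq' : ℕ → W} {vseq vseq' : ℕ → V}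
    (t : ℕ) (hw : ∀ s, s < t → wseq s = wseq' s) (hv : ∀ s, s < t + 1 → vseq s = vseq' s) :
    uAt f h g x0 wseq vseq t = uAt f h g x0 wseq' vseq' t := by
  have hv' : (fun s : Fin (t + 1) => vseq (s : ℕ)) = fun s : Fin (t + 1) => vseq' (s : ℕ) := by
    funext s; exact hv s s.isLt
  unfold uAt yAt
  rw [hist_congr t hw (fun s hs => hv s (hs.trans (Nat.lt_succ_self t))), hv']

theorem measurable_snoc {α : Type*} [MeasurableSpace α] {β : Type*} [MeasurableSpace β]
    {k : ℕ} {F : α → Fin k → β} {G : α → β} (hF : Measurable F) (hG : Measurable G) :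
    Measurable fun a => (Fin.snoc (F a) (G a) : Fin (k + 1) → β) := by
  apply measurable_pi_lambda
  intro i
  induction i using Fin.lastCases with
  | last => simpa [Fin.snoc_last] using hG
  | cast j => simp only [Fin.snoc_castSucc]; exact (measurable_pi_apply j).comp hF

theorem measurable_hist {f : ℕ → (Fin n → ℝ) → (Fin m → ℝ) → W → (Fin n → ℝ)}
    {h : (t : ℕ) → (Fin (t + 1) → (Fin n → ℝ)) → (Fin t → (Fin m → ℝ)) →
      (Fin (t + 1) → V) → Y}
    {g : ℕ → Y → (Fin m → ℝ)}
    (hfm : ∀ t, Measurable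
      (fun q : (Fin n → ℝ) × (Fin m → ℝ) × W => f t q.1 q.2.1 q.2.2))
    (hhm : ∀ t, Measurable
      (fun q : (Fin (t + 1) → (Fin n → ℝ)) × (Fin t → (Fin m → ℝ)) ×
        (Fin (t + 1) → V) => h t q.1 q.2.1 q.2.2))
    (hg : ∀ t, Measurable (g t)) (t : ℕ) :
    Measurable fun q : (Fin n → ℝ) × (ℕ → W) × (ℕ → V) =>
      hist f h g q.1 q.2.1 q.2.2 t := by
  induction t with
  | zero =>
    simp only [hist]
    exact (measurable_pi_lambda _ fun _ => measurable_fst).prodMk measurable_const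
  | succ t ih =>
    have h1 : Measurable fun q : (Fin n → ℝ) × (ℕ → W) × (ℕ → V) =>
        (hist f h g q.1 q.2.1 q.2.2 t).1 := ih.fst
    have h2 : Measurable fun q : (Fin n → ℝ) × (ℕ → W) × (ℕ → V) =>
        (hist f h g q.1 q.2.1 q.2.2 t).2 := ih.snd
    have hrestr : Measurable fun q : (Fin n → ℝ) × (ℕ → W) × (ℕ → V) =>
        (fun s : Fin (t + 1) => q.2.2 (s : ℕ)) :=
      measurable_pi_lambda _ fun s =>
        (measurable_pi_apply (s : ℕ)).comp (measurable_snd.comp measurable_snd)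
    have hy : Measurable fun q : (Fin n → ℝ) × (ℕ → W) × (ℕ → V) =>
        h t (hist f h g q.1 q.2.1 q.2.2 t).1 (hist f h g q.1 q.2.1 q.2.2 t).2
          (fun s : Fin (t + 1) => q.2.2 (s : ℕ)) :=
      (hhm t).comp (h1.prodMk (h2.prodMk hrestr))
    have hu : Measurable fun q : (Fin n → ℝ) × (ℕ → W) × (ℕ → V) =>
        g t (h t (hist f h g q.1 q.2.1 q.2.2 t).1 (hist f h g q.1 q.2.1 q.2.2 t).2
          (fun s : Fin (t + 1) => q.2.2 (s : ℕ))) := (hg t).comp hy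
    have hxnew : Measurable fun q : (Fin n → ℝ) × (ℕ → W) × (ℕ → V) =>
        f t ((hist f h g q.1 q.2.1 q.2.2 t).1 (Fin.last t))
          (g t (h t (hist f h g q.1 q.2.1 q.2.2 t).1 (hist f h g q.1 q.2.1 q.2.2 t).2
            (fun s : Fin (t + 1) => q.2.2 (s : ℕ)))) (q.2.1 t) :=
      (hfm t).comp (((measurable_pi_apply _).comp h1).prodMk
        (hu.prodMk ((measurable_pi_apply t).comp (measurable_fst.comp measurable_snd))))
    simp only [hist]
    exact (measurable_snoc h1 hxnew).prodMk (measurable_snoc h2 hu)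

theorem measurable_xAt {f : ℕ → (Fin n → ℝ) → (Fin m → ℝ) → W → (Fin n → ℝ)}
    {h : (t : ℕ) → (Fin (t + 1) → (Fin n → ℝ)) → (Fin t → (Fin m → ℝ)) →
      (Fin (t + 1) → V) → Y}
    {g : ℕ → Y → (Fin m → ℝ)}
    (hfm : ∀ t, Measurable
      (fun q : (Fin n → ℝ) × (Fin m → ℝ) × W => f t q.1 q.2.1 q.2.2))
    (hhm : ∀ t, Measurable
      (fun q : (Fin (t + 1) → (Fin n → ℝ)) × (Fin t → (Fin m → ℝ)) ×
        (Fin (t + 1) → V) => h t q.1 q.2.1 q.2.2))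
    (hg : ∀ t, Measurable (g t)) (t : ℕ) :
    Measurable fun q : (Fin n → ℝ) × (ℕ → W) × (ℕ → V) =>
      xAt f h g q.1 q.2.1 q.2.2 t :=
  (measurable_pi_apply _).comp (measurable_hist hfm hhm hg t).fst

theorem measurable_uAt {f : ℕ → (Fin n → ℝ) → (Fin m → ℝ) → W → (Fin n → ℝ)}
    {h : (t : ℕ) → (Fin (t + 1) → (Fin n → ℝ)) → (Fin t → (Fin m → ℝ)) →
      (Fin (t + 1) → V) → Y}
    {g : ℕ → Y → (Fin m → ℝ)}
    (hfm : ∀ t, Measurable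
      (fun q : (Fin n → ℝ) × (Fin m → ℝ) × W => f t q.1 q.2.1 q.2.2))
    (hhm : ∀ t, Measurable
      (fun q : (Fin (t + 1) → (Fin n → ℝ)) × (Fin t → (Fin m → ℝ)) ×
        (Fin (t + 1) → V) => h t q.1 q.2.1 q.2.2))
    (hg : ∀ t, Measurable (g t)) (t : ℕ) :
    Measurable fun q : (Fin n → ℝ) × (ℕ → W) × (ℕ → V) =>
      uAt f h g q.1 q.2.1 q.2.2 t := by
  have hrestr : Measurable fun q : (Fin n → ℝ) × (ℕ → W) × (ℕ → V) =>
      (fun s : Fin (t + 1) => q.2.2 (s : ℕ)) :=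
    measurable_pi_lambda _ fun s =>
      (measurable_pi_apply (s : ℕ)).comp (measurable_snd.comp measurable_snd)
  exact (hg t).comp ((hhm t).comp
    (((measurable_hist hfm hhm hg t).fst).prodMk
      (((measurable_hist hfm hhm hg t).snd).prodMk hrestr)))

/-- Noise sequence of DM `i` read off from a point of the product space (padded by a
default value beyond the horizon). -/
def wOf [Inhabited W] (n N T : ℕ)
    (z : ∀ idx : IdxType N T, idxSpace n N T W V idx) (i : Fin N) : ℕ → W :=
  fun s => if hs : s < T then z (some (Sum.inl (i, ⟨s, hs⟩))) else default

/-- Observation-noise sequence of DM `i` read off from a point of the product space. -/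
def vOf [Inhabited V] (n N T : ℕ)
    (z : ∀ idx : IdxType N T, idxSpace n N T W V idx) (i : Fin N) : ℕ → V :=
  fun s => if hs : s < T then z (some (Sum.inr (i, ⟨s, hs⟩))) else default

/-- The joint random element collecting all primitive random variables. -/
def bigZ {Ω : Type*} (n N T : ℕ) (x0 : Fin N → Ω → (Fin n → ℝ))
    (w : Fin N → ℕ → Ω → W) (v : Fin N → ℕ → Ω → V) :
    Ω → ∀ idx : IdxType N T, idxSpace n N T W V idx :=
  fun ω idx => idxFun n N T x0 w v idx ω

theorem measurable_wOf [Inhabited W] (n N T : ℕ) (i : Fin N) :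
    Measurable fun z : ∀ idx : IdxType N T, idxSpace n N T W V idx =>
      wOf n N T z i := by
  apply measurable_pi_lambda
  intro s
  by_cases hs : s < T
  · rw [show (fun c : ∀ idx : IdxType N T, idxSpace n N T W V idx => wOf n N T c i s) = fun c => (c (some (Sum.inl (i, ⟨s, hs⟩))) : W) from funext fun c => dif_pos hs]
    exact measurable_pi_apply _
  · rw [show (fun c : ∀ idx : IdxType N T, idxSpace n N T W V idx => wOf n N T c i s) = fun _ => (default : W) from funext fun c => dif_neg hs]
    exact measurable_const

theorem measurable_vOf [Inhabited V] (n N T : ℕ) (i : Fin N) :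
    Measurable fun z : ∀ idx : IdxType N T, idxSpace n N T W V idx =>
      vOf n N T z i := by
  apply measurable_pi_lambda
  intro s
  by_cases hs : s < T
  · rw [show (fun c : ∀ idx : IdxType N T, idxSpace n N T W V idx => vOf n N T c i s) = fun c => (c (some (Sum.inr (i, ⟨s, hs⟩))) : V) from funext fun c => dif_pos hs]
    exact measurable_pi_apply _
  · rw [show (fun c : ∀ idx : IdxType N T, idxSpace n N T W V idx => vOf n N T c i s) = fun _ => (default : V) from funext fun c => dif_neg hs]
    exact measurable_const

theorem measurable_bigZ {Ω : Type*} [MeasurableSpace Ω] (n N T : ℕ)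
    {x0 : Fin N → Ω → (Fin n → ℝ)} {w : Fin N → ℕ → Ω → W} {v : Fin N → ℕ → Ω → V}
    (hx0 : ∀ i, Measurable (x0 i)) (hw : ∀ i t, Measurable (w i t))
    (hv : ∀ i t, Measurable (v i t)) :
    Measurable (bigZ n N T x0 w v) := by
  apply measurable_pi_lambda
  intro idx
  match idx with
  | none => exact measurable_pi_lambda _ fun i => hx0 i
  | some (Sum.inl (i, t)) => exact hw i t
  | some (Sum.inr (i, t)) => exact hv i t

/-- The `(t, i)` integrand of the cost, as a function on the product space. -/
noncomputable def KFun [Inhabited W] [Inhabited V] (N T : ℕ)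
    (c : (Fin n → ℝ) → (Fin m → ℝ) → (Fin m → ℝ) → (Fin n → ℝ) → ℝ)
    (f : ℕ → (Fin n → ℝ) → (Fin m → ℝ) → W → (Fin n → ℝ))
    (h : (t : ℕ) → (Fin (t + 1) → (Fin n → ℝ)) → (Fin t → (Fin m → ℝ)) →
      (Fin (t + 1) → V) → Y)
    (γ : Fin N → ℕ → Y → (Fin m → ℝ)) (t : ℕ) (i : Fin N)
    (z : ∀ idx : IdxType N T, idxSpace n N T W V idx) : ℝ≥0∞ :=
  ENNReal.ofReal
    (c (xAt f h (γ i) (z none i) (wOf n N T z i) (vOf n N T z i) t)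
      (uAt f h (γ i) (z none i) (wOf n N T z i) (vOf n N T z i) t)
      ((N : ℝ)⁻¹ • ∑ p : Fin N,
        uAt f h (γ p) (z none p) (wOf n N T z p) (vOf n N T z p) t)
      ((N : ℝ)⁻¹ • ∑ p : Fin N,
        xAt f h (γ p) (z none p) (wOf n N T z p) (vOf n N T z p) t))

theorem measurable_KFun [Inhabited W] [Inhabited V] (N T : ℕ)
    {c : (Fin n → ℝ) → (Fin m → ℝ) → (Fin m → ℝ) → (Fin n → ℝ) → ℝ}
    {f : ℕ → (Fin n → ℝ) → (Fin m → ℝ) → W → (Fin n → ℝ)}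
    {h : (t : ℕ) → (Fin (t + 1) → (Fin n → ℝ)) → (Fin t → (Fin m → ℝ)) →
      (Fin (t + 1) → V) → Y}
    {γ : Fin N → ℕ → Y → (Fin m → ℝ)}
    (hcm : Measurable
      (fun q : (Fin n → ℝ) × (Fin m → ℝ) × (Fin m → ℝ) × (Fin n → ℝ) =>
        c q.1 q.2.1 q.2.2.1 q.2.2.2))
    (hfm : ∀ t, Measurable
      (fun q : (Fin n → ℝ) × (Fin m → ℝ) × W => f t q.1 q.2.1 q.2.2))
    (hhm : ∀ t, Measurable
      (fun q : (Fin (t + 1) → (Fin n → ℝ)) × (Fin t → (Fin m → ℝ)) ×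
        (Fin (t + 1) → V) => h t q.1 q.2.1 q.2.2))
    (hγ : ∀ i t, Measurable (γ i t)) (t : ℕ) (i : Fin N) :
    Measurable (KFun N T c f h γ t i) := by
  have htriple : ∀ p : Fin N,
      Measurable fun z : ∀ idx : IdxType N T, idxSpace n N T W V idx =>
        ((z none p, wOf n N T z p, vOf n N T z p) :
          (Fin n → ℝ) × (ℕ → W) × (ℕ → V)) := fun p =>
    ((measurable_pi_apply p).comp (measurable_pi_apply none)).prodMk
      ((measurable_wOf n N T p).prodMk (measurable_vOf n N T p))
  have hX : ∀ p : Fin N,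
      Measurable fun z : ∀ idx : IdxType N T, idxSpace n N T W V idx =>
        xAt f h (γ p) (z none p) (wOf n N T z p) (vOf n N T z p) t := fun p =>
    (measurable_xAt hfm hhm (hγ p) t).comp (htriple p)
  have hU : ∀ p : Fin N,
      Measurable fun z : ∀ idx : IdxType N T, idxSpace n N T W V idx =>
        uAt f h (γ p) (z none p) (wOf n N T z p) (vOf n N T z p) t := fun p =>
    (measurable_uAt hfm hhm (hγ p) t).comp (htriple p)
  have hUbar : Measurable fun z : ∀ idx : IdxType N T, idxSpace n N T W V idx =>
      (N : ℝ)⁻¹ • ∑ p : Fin N,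
        uAt f h (γ p) (z none p) (wOf n N T z p) (vOf n N T z p) t :=
    (Finset.measurable_sum Finset.univ fun p _ => hU p).const_smul ((N : ℝ)⁻¹)
  have hXbar : Measurable fun z : ∀ idx : IdxType N T, idxSpace n N T W V idx =>
      (N : ℝ)⁻¹ • ∑ p : Fin N,
        xAt f h (γ p) (z none p) (wOf n N T z p) (vOf n N T z p) t :=
    (Finset.measurable_sum Finset.univ fun p _ => hX p).const_smul ((N : ℝ)⁻¹)
  exact ENNReal.measurable_ofReal.comp
    (hcm.comp ((hX i).prodMk ((hU i).prodMk (hUbar.prodMk hXbar))))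

theorem mfCost_rep [Inhabited W] [Inhabited V] {Ω : Type*} [MeasurableSpace Ω]
    (P : Measure Ω) (N T : ℕ)
    {c : (Fin n → ℝ) → (Fin m → ℝ) → (Fin m → ℝ) → (Fin n → ℝ) → ℝ}
    {f : ℕ → (Fin n → ℝ) → (Fin m → ℝ) → W → (Fin n → ℝ)}
    {h : (t : ℕ) → (Fin (t + 1) → (Fin n → ℝ)) → (Fin t → (Fin m → ℝ)) →
      (Fin (t + 1) → V) → Y}
    {γ : Fin N → ℕ → Y → (Fin m → ℝ)}
    {x0 : Fin N → Ω → (Fin n → ℝ)} {w : Fin N → ℕ → Ω → W} {v : Fin N → ℕ → Ω → V}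
    (hcm : Measurable
      (fun q : (Fin n → ℝ) × (Fin m → ℝ) × (Fin m → ℝ) × (Fin n → ℝ) =>
        c q.1 q.2.1 q.2.2.1 q.2.2.2))
    (hfm : ∀ t, Measurable
      (fun q : (Fin n → ℝ) × (Fin m → ℝ) × W => f t q.1 q.2.1 q.2.2))
    (hhm : ∀ t, Measurable
      (fun q : (Fin (t + 1) → (Fin n → ℝ)) × (Fin t → (Fin m → ℝ)) ×
        (Fin (t + 1) → V) => h t q.1 q.2.1 q.2.2))
    (hγ : ∀ i t, Measurable (γ i t))
    (hx0 : ∀ i, Measurable (x0 i)) (hw : ∀ i t, Measurable (w i t))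
    (hv : ∀ i t, Measurable (v i t)) :
    mfCost P N T c f h γ x0 w v
      = (N : ℝ≥0∞)⁻¹ * ∑ t ∈ Finset.range T, ∑ i : Fin N,
          ∫⁻ z, KFun N T c f h γ t i z ∂(Measure.map (bigZ n N T x0 w v) P) := by
  unfold mfCost
  congr 1
  refine Finset.sum_congr rfl fun t ht => Finset.sum_congr rfl fun i _ => ?_
  have ht' : t < T := Finset.mem_range.mp ht
  rw [lintegral_map (measurable_KFun N T hcm hfm hhm hγ t i)
    (measurable_bigZ n N T hx0 hw hv)]
  refine lintegral_congr fun ω => ?_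
  have hXeq : ∀ p : Fin N,
      xAt f h (γ p) (x0 p ω) (fun s => w p s ω) (fun s => v p s ω) t
        = xAt f h (γ p) (bigZ n N T x0 w v ω none p)
            (wOf n N T (bigZ n N T x0 w v ω) p) (vOf n N T (bigZ n N T x0 w v ω) p) t := by
    intro p
    refine xAt_congr t (fun s hs => ?_) (fun s hs => ?_)
    · simp [wOf, hs.trans ht', bigZ, idxFun]
    · simp [vOf, hs.trans ht', bigZ, idxFun]
  have hUeq : ∀ p : Fin N,
      uAt f h (γ p) (x0 p ω) (fun s => w p s ω) (fun s => v p s ω) t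
        = uAt f h (γ p) (bigZ n N T x0 w v ω none p)
            (wOf n N T (bigZ n N T x0 w v ω) p) (vOf n N T (bigZ n N T x0 w v ω) p) t := by
    intro p
    refine uAt_congr t (fun s hs => ?_) (fun s hs => ?_)
    · simp [wOf, hs.trans ht', bigZ, idxFun]
    · simp [vOf, Nat.lt_of_lt_of_le hs ht', bigZ, idxFun]
  unfold KFun
  congr 2
  · exact hXeq i
  · exact hUeq i
  · exact congrArg _ (Finset.sum_congr rfl fun p _ => hUeq p)
  · exact congrArg _ (Finset.sum_congr rfl fun p _ => hXeq p)

theorem map_bigZ_eq_pi {Ω : Type*} [MeasurableSpace Ω]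
    (P : Measure Ω) [IsProbabilityMeasure P] (n N T : ℕ)
    {x0 : Fin N → Ω → (Fin n → ℝ)} {w : Fin N → ℕ → Ω → W} {v : Fin N → ℕ → Ω → V}
    (hx0 : ∀ i, Measurable (x0 i)) (hw : ∀ i t, Measurable (w i t))
    (hv : ∀ i t, Measurable (v i t))
    (hindep : ProbabilityTheory.iIndepFun
      (m := fun idx : IdxType N T => idxSpaceMeasurable n N T W V idx)
      (idxFun n N T x0 w v) P) :
    Measure.map (bigZ n N T x0 w v) P
      = Measure.pi (fun idx : IdxType N T => P.map (idxFun n N T x0 w v idx)) := by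
  have hμmeas : ∀ idx : IdxType N T, Measurable (idxFun n N T x0 w v idx) := by
    intro idx
    match idx with
    | none => exact measurable_pi_lambda _ fun i => hx0 i
    | some (Sum.inl (i, t)) => exact hw i t
    | some (Sum.inr (i, t)) => exact hv i t
  haveI : ∀ idx : IdxType N T,
      IsProbabilityMeasure (P.map (idxFun n N T x0 w v idx)) :=
    fun idx => Measure.isProbabilityMeasure_map (hμmeas idx).aemeasurable
  refine (Measure.pi_eq
    (μ := fun idx : IdxType N T => P.map (idxFun n N T x0 w v idx)) fun s hs => ?_).symm
  rw [Measure.map_apply (measurable_bigZ n N T hx0 hw hv) (MeasurableSet.univ_pi hs)]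
  have hpre : bigZ n N T x0 w v ⁻¹' Set.pi Set.univ s
      = ⋂ idx ∈ (Finset.univ : Finset (IdxType N T)),
          idxFun n N T x0 w v idx ⁻¹' s idx := by
    ext ω
    simp [bigZ, Set.mem_pi]
  rw [hpre, hindep.measure_inter_preimage_eq_mul Finset.univ (fun idx _ => hs idx)]
  exact Finset.prod_congr rfl fun idx _ =>
    (Measure.map_apply (hμmeas idx) (hs idx)).symm

theorem map_bigZ_perm {Ω : Type*} [MeasurableSpace Ω]
    (P : Measure Ω) [IsProbabilityMeasure P] (n N T : ℕ)
    {x0 : Fin N → Ω → (Fin n → ℝ)} {w : Fin N → ℕ → Ω → W} {v : Fin N → ℕ → Ω → V}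
    (hx0 : ∀ i, Measurable (x0 i)) (hw : ∀ i t, Measurable (w i t))
    (hv : ∀ i t, Measurable (v i t))
    (hx0exch : ∀ σ : Equiv.Perm (Fin N),
      Measure.map (fun ω => fun i => x0 (σ i) ω) P
        = Measure.map (fun ω => fun i => x0 i ω) P)
    (hwid : ∀ i j : Fin N, ∀ t : ℕ, Measure.map (w i t) P = Measure.map (w j t) P)
    (hvid : ∀ i j : Fin N, ∀ t : ℕ, Measure.map (v i t) P = Measure.map (v j t) P)
    (hindep : ProbabilityTheory.iIndepFun
      (m := fun idx : IdxType N T => idxSpaceMeasurable n N T W V idx)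
      (idxFun n N T x0 w v) P)
    (σ : Equiv.Perm (Fin N)) :
    Measure.map (bigZ n N T (fun j => x0 (σ j)) (fun j => w (σ j)) (fun j => v (σ j))) P
      = Measure.map (bigZ n N T x0 w v) P := by
  have hμmeas : ∀ idx : IdxType N T, Measurable (idxFun n N T x0 w v idx) := by
    intro idx
    match idx with
    | none => exact measurable_pi_lambda _ fun i => hx0 i
    | some (Sum.inl (i, t)) => exact hw i t
    | some (Sum.inr (i, t)) => exact hv i t
  set μ : ∀ idx : IdxType N T, Measure (idxSpace n N T W V idx) :=
    fun idx => P.map (idxFun n N T x0 w v idx) with hμ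
  haveI : ∀ idx : IdxType N T, IsProbabilityMeasure (μ idx) :=
    fun idx => Measure.isProbabilityMeasure_map (hμmeas idx).aemeasurable
  have h1 : Measure.map (bigZ n N T x0 w v) P = Measure.pi μ :=
    map_bigZ_eq_pi P n N T hx0 hw hv hindep
  rw [h1]
  have hZ' : Measurable
      (bigZ n N T (fun j => x0 (σ j)) (fun j => w (σ j)) (fun j => v (σ j))) :=
    measurable_bigZ n N T (fun i => hx0 (σ i)) (fun i t => hw (σ i) t)
      (fun i t => hv (σ i) t)
  refine (Measure.pi_eq (μ := μ) fun s hs => ?_).symm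
  rw [Measure.map_apply hZ' (MeasurableSet.univ_pi hs)]
  set r : (Fin N → Fin n → ℝ) → (Fin N → Fin n → ℝ) := fun g j => g (σ j) with hrdef
  have hr : Measurable r := measurable_pi_lambda _ fun j => measurable_pi_apply _
  set s'' : ∀ idx : IdxType N T, Set (idxSpace n N T W V idx) := fun idx =>
    match idx with
    | none => r ⁻¹' s none
    | some (Sum.inl (j, t)) => s (some (Sum.inl (σ.symm j, t)))
    | some (Sum.inr (j, t)) => s (some (Sum.inr (σ.symm j, t))) with hs''def
  have hs'' : ∀ idx, MeasurableSet (s'' idx) := by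
    intro idx
    match idx with
    | none => exact hr (hs none)
    | some (Sum.inl (j, t)) => exact hs _
    | some (Sum.inr (j, t)) => exact hs _
  have hpre : bigZ n N T (fun j => x0 (σ j)) (fun j => w (σ j)) (fun j => v (σ j))
        ⁻¹' Set.pi Set.univ s
      = bigZ n N T x0 w v ⁻¹' Set.pi Set.univ s'' := by
    ext ω
    simp only [Set.mem_preimage, Set.mem_pi, Set.mem_univ, forall_true_left]
    constructor
    · intro H idx
      match idx with
      | none => exact H none
      | some (Sum.inl (j, t)) =>
        have hh := H (some (Sum.inl (σ.symm j, t)))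
        simp only [bigZ, idxFun, Equiv.apply_symm_apply] at hh
        exact hh
      | some (Sum.inr (j, t)) =>
        have hh := H (some (Sum.inr (σ.symm j, t)))
        simp only [bigZ, idxFun, Equiv.apply_symm_apply] at hh
        exact hh
    · intro H idx
      match idx with
      | none => exact H none
      | some (Sum.inl (i, t)) =>
        have hh := H (some (Sum.inl (σ i, t)))
        simp only [bigZ, idxFun, hs''def] at hh ⊢
        rwa [Equiv.symm_apply_apply] at hh
      | some (Sum.inr (i, t)) =>
        have hh := H (some (Sum.inr (σ i, t)))
        simp only [bigZ, idxFun, hs''def] at hh ⊢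
        rwa [Equiv.symm_apply_apply] at hh
  rw [hpre, ← Measure.map_apply (measurable_bigZ n N T hx0 hw hv)
    (MeasurableSet.univ_pi hs''), h1, Measure.pi_pi]
  -- now compare the two products coordinate-block by coordinate-block
  rw [Fintype.prod_option, Fintype.prod_option, Fintype.prod_sum_type,
    Fintype.prod_sum_type]
  have hnone : μ none (s'' none) = μ none (s none) := by
    have hmap : (μ none).map r = μ none := by
      rw [hμ]
      exact (Measure.map_map hr (hμmeas none)).trans (hx0exch σ)
    show μ none (r ⁻¹' s none) = μ none (s none)
    have hmapply : (μ none).map r (s none) = μ none (r ⁻¹' s none) :=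
      Measure.map_apply (μ := μ none) hr (hs none)
    exact hmapply.symm.trans (by rw [hmap]; rfl)
  have hinl : (∏ a : Fin N × Fin T, μ (some (Sum.inl a)) (s'' (some (Sum.inl a))))
      = ∏ a : Fin N × Fin T, μ (some (Sum.inl a)) (s (some (Sum.inl a))) := by
    refine Fintype.prod_equiv (Equiv.prodCongr σ.symm (Equiv.refl (Fin T))) _ _ fun a => ?_
    show μ (some (Sum.inl (a.1, a.2))) (s (some (Sum.inl (σ.symm a.1, a.2))))
      = μ (some (Sum.inl (σ.symm a.1, a.2))) (s (some (Sum.inl (σ.symm a.1, a.2))))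
    have : μ (some (Sum.inl (a.1, a.2))) = μ (some (Sum.inl (σ.symm a.1, a.2))) :=
      hwid a.1 (σ.symm a.1) a.2
    rw [this]
    rfl
  have hinr : (∏ a : Fin N × Fin T, μ (some (Sum.inr a)) (s'' (some (Sum.inr a))))
      = ∏ a : Fin N × Fin T, μ (some (Sum.inr a)) (s (some (Sum.inr a))) := by
    refine Fintype.prod_equiv (Equiv.prodCongr σ.symm (Equiv.refl (Fin T))) _ _ fun a => ?_
    show μ (some (Sum.inr (a.1, a.2))) (s (some (Sum.inr (σ.symm a.1, a.2))))
      = μ (some (Sum.inr (σ.symm a.1, a.2))) (s (some (Sum.inr (σ.symm a.1, a.2))))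
    have : μ (some (Sum.inr (a.1, a.2))) = μ (some (Sum.inr (σ.symm a.1, a.2))) :=
      hvid a.1 (σ.symm a.1) a.2
    rw [this]
    rfl
  rw [hnone, hinl, hinr]

theorem mfCost_perm [Inhabited W] [Inhabited V] {Ω : Type*} [MeasurableSpace Ω]
    (P : Measure Ω) [IsProbabilityMeasure P] (N T : ℕ)
    {c : (Fin n → ℝ) → (Fin m → ℝ) → (Fin m → ℝ) → (Fin n → ℝ) → ℝ}
    {f : ℕ → (Fin n → ℝ) → (Fin m → ℝ) → W → (Fin n → ℝ)}
    {h : (t : ℕ) → (Fin (t + 1) → (Fin n → ℝ)) → (Fin t → (Fin m → ℝ)) →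
      (Fin (t + 1) → V) → Y}
    {γ : Fin N → ℕ → Y → (Fin m → ℝ)}
    {x0 : Fin N → Ω → (Fin n → ℝ)} {w : Fin N → ℕ → Ω → W} {v : Fin N → ℕ → Ω → V}
    (hcm : Measurable
      (fun q : (Fin n → ℝ) × (Fin m → ℝ) × (Fin m → ℝ) × (Fin n → ℝ) =>
        c q.1 q.2.1 q.2.2.1 q.2.2.2))
    (hfm : ∀ t, Measurable
      (fun q : (Fin n → ℝ) × (Fin m → ℝ) × W => f t q.1 q.2.1 q.2.2))
    (hhm : ∀ t, Measurable
      (fun q : (Fin (t + 1) → (Fin n → ℝ)) × (Fin t → (Fin m → ℝ)) ×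
        (Fin (t + 1) → V) => h t q.1 q.2.1 q.2.2))
    (hγ : ∀ i t, Measurable (γ i t))
    (hx0 : ∀ i, Measurable (x0 i)) (hw : ∀ i t, Measurable (w i t))
    (hv : ∀ i t, Measurable (v i t))
    (hx0exch : ∀ σ : Equiv.Perm (Fin N),
      Measure.map (fun ω => fun i => x0 (σ i) ω) P
        = Measure.map (fun ω => fun i => x0 i ω) P)
    (hwid : ∀ i j : Fin N, ∀ t : ℕ, Measure.map (w i t) P = Measure.map (w j t) P)
    (hvid : ∀ i j : Fin N, ∀ t : ℕ, Measure.map (v i t) P = Measure.map (v j t) P)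
    (hindep : ProbabilityTheory.iIndepFun
      (m := fun idx : IdxType N T => idxSpaceMeasurable n N T W V idx)
      (idxFun n N T x0 w v) P)
    (σ : Equiv.Perm (Fin N)) :
    mfCost P N T c f h (fun i => γ (σ i)) x0 w v = mfCost P N T c f h γ x0 w v := by
  have step1 : mfCost P N T c f h (fun i => γ (σ i)) x0 w v
      = mfCost P N T c f h γ (fun j => x0 (σ.symm j)) (fun j => w (σ.symm j))
          (fun j => v (σ.symm j)) := by
    unfold mfCost
    congr 1
    refine Finset.sum_congr rfl fun t _ => ?_
    refine Fintype.sum_equiv σ _ _ fun i => ?_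
    refine lintegral_congr fun ω => ?_
    have hsum_u :
        (∑ p : Fin N, uAt f h (γ (σ p)) (x0 p ω)
            (fun s => w p s ω) (fun s => v p s ω) t)
          = ∑ p : Fin N, uAt f h (γ p) (x0 (σ.symm p) ω)
              (fun s => w (σ.symm p) s ω) (fun s => v (σ.symm p) s ω) t := by
      refine Fintype.sum_equiv σ _ _ fun p => ?_
      simp
    have hsum_x :
        (∑ p : Fin N, xAt f h (γ (σ p)) (x0 p ω)
            (fun s => w p s ω) (fun s => v p s ω) t)
          = ∑ p : Fin N, xAt f h (γ p) (x0 (σ.symm p) ω)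
              (fun s => w (σ.symm p) s ω) (fun s => v (σ.symm p) s ω) t := by
      refine Fintype.sum_equiv σ _ _ fun p => ?_
      simp
    rw [hsum_u, hsum_x]
    simp
  have step2 : mfCost P N T c f h γ (fun j => x0 (σ.symm j)) (fun j => w (σ.symm j))
      (fun j => v (σ.symm j)) = mfCost P N T c f h γ x0 w v := by
    rw [mfCost_rep P N T hcm hfm hhm hγ (fun i => hx0 (σ.symm i))
        (fun i t => hw (σ.symm i) t) (fun i t => hv (σ.symm i) t),
      mfCost_rep P N T hcm hfm hhm hγ hx0 hw hv,
      map_bigZ_perm P n N T hx0 hw hv hx0exch hwid hvid hindep σ.symm]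
  rw [step1, step2]

end Aux

open Fin.NatCast

/-- Lemma 3 of the paper: the convex mean-field `N`-decision-maker team with compact
convex action set, continuous nonnegative cost, continuous dynamics and observations,
exchangeable zero-mean initial states and i.i.d. zero-mean noises, is symmetrically
optimal: for every admissible policy profile with finite cost there is an identically
symmetric profile performing at least as well. -/
theorem mf_team_symmetrically_optimal
    {Ω : Type*} [MeasurableSpace Ω] (P : Measure Ω) [IsProbabilityMeasure P]
    [TopologicalSpace Y] [PolishSpace Y] [MeasurableSpace Y] [BorelSpace Y]
    {n m dw dv : ℕ} (N T : ℕ) (hN : 1 ≤ N) (hT : 1 ≤ T)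
    (Uset : Set (Fin m → ℝ)) (hUcpt : IsCompact Uset) (hUconv : Convex ℝ Uset)
    (hUne : Uset.Nonempty)
    (c : (Fin n → ℝ) → (Fin m → ℝ) → (Fin m → ℝ) → (Fin n → ℝ) → ℝ)
    (hccont : Continuous
      (fun q : (Fin n → ℝ) × (Fin m → ℝ) × (Fin m → ℝ) × (Fin n → ℝ) =>
        c q.1 q.2.1 q.2.2.1 q.2.2.2))
    (hc0 : ∀ x u ubar xbar, 0 ≤ c x u ubar xbar)
    (f : ℕ → (Fin n → ℝ) → (Fin m → ℝ) → (Fin dw → ℝ) → (Fin n → ℝ))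
    -- `f t` is continuous in the state and action
    (hf : ∀ t wv, Continuous (fun q : (Fin n → ℝ) × (Fin m → ℝ) => f t q.1 q.2 wv))
    (hfm : ∀ t, Measurable
      (fun q : (Fin n → ℝ) × (Fin m → ℝ) × (Fin dw → ℝ) => f t q.1 q.2.1 q.2.2))
    (h : (t : ℕ) → (Fin (t + 1) → (Fin n → ℝ)) → (Fin t → (Fin m → ℝ)) →
      (Fin (t + 1) → (Fin dv → ℝ)) → Y)
    -- `h t` is continuous in the state and action histories
    (hhc : ∀ t vv, Continuous
      (fun q : (Fin (t + 1) → (Fin n → ℝ)) × (Fin t → (Fin m → ℝ)) => h t q.1 q.2 vv))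
    (hhm : ∀ t, Measurable
      (fun q : (Fin (t + 1) → (Fin n → ℝ)) × (Fin t → (Fin m → ℝ)) ×
        (Fin (t + 1) → (Fin dv → ℝ)) => h t q.1 q.2.1 q.2.2))
    (x0 : Fin N → Ω → (Fin n → ℝ)) (hx0 : ∀ i, Measurable (x0 i))
    (w : Fin N → ℕ → Ω → (Fin dw → ℝ)) (hw : ∀ i t, Measurable (w i t))
    (v : Fin N → ℕ → Ω → (Fin dv → ℝ)) (hv : ∀ i t, Measurable (v i t))
    -- the initial states are exchangeable, zero mean, identically distributed
    (hx0exch : ∀ σ : Equiv.Perm (Fin N),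
      Measure.map (fun ω => fun i => x0 (σ i) ω) P
        = Measure.map (fun ω => fun i => x0 i ω) P)
    (hx0mean : ∀ i, ∫ ω, x0 i ω ∂P = 0)
    (hx0id : ∀ i j, Measure.map (x0 i) P = Measure.map (x0 j) P)
    -- the noises are zero mean and identically distributed across decision makers
    (hwmean : ∀ i t, ∫ ω, w i t ω ∂P = 0)
    (hvmean : ∀ i t, ∫ ω, v i t ω ∂P = 0)
    (hwid : ∀ i j : Fin N, ∀ t : ℕ, Measure.map (w i t) P = Measure.map (w j t) P)
    (hvid : ∀ i j : Fin N, ∀ t : ℕ, Measure.map (v i t) P = Measure.map (v j t) P)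
    -- the noises are mutually independent across decision makers and time,
    -- independent of each other and of the initial states
    (hindep : ProbabilityTheory.iIndepFun
      (m := fun idx : IdxType N T => idxSpaceMeasurable n N T (Fin dw → ℝ) (Fin dv → ℝ) idx)
      (idxFun n N T x0 w v) P)
    -- the team problem is convex in policies
    (hJconv : ∀ γ₁ γ₂ : Fin N → ℕ → Y → (Fin m → ℝ),
      (∀ i t, Measurable (γ₁ i t)) → (∀ i t y, γ₁ i t y ∈ Uset) →
      (∀ i t, Measurable (γ₂ i t)) → (∀ i t y, γ₂ i t y ∈ Uset) →
      mfCost P N T c f h γ₁ x0 w v ≠ ⊤ → mfCost P N T c f h γ₂ x0 w v ≠ ⊤ →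
      ∀ α : ℝ, α ∈ Set.Ioo (0 : ℝ) 1 →
        mfCost P N T c f h (fun i t y => α • γ₁ i t y + (1 - α) • γ₂ i t y) x0 w v
          ≤ ENNReal.ofReal α * mfCost P N T c f h γ₁ x0 w v
            + ENNReal.ofReal (1 - α) * mfCost P N T c f h γ₂ x0 w v) :
    -- the team is symmetrically optimal
    ∀ γ : Fin N → ℕ → Y → (Fin m → ℝ),
      (∀ i t, Measurable (γ i t)) → (∀ i t y, γ i t y ∈ Uset) →
      mfCost P N T c f h γ x0 w v ≠ ⊤ →
      ∃ γs : ℕ → Y → (Fin m → ℝ),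
        (∀ t, Measurable (γs t)) ∧ (∀ t y, γs t y ∈ Uset) ∧
        mfCost P N T c f h (fun _ => γs) x0 w v ≤ mfCost P N T c f h γ x0 w v := by
  intro γ hγmeas hγmem hγfin
  haveI : NeZero N := ⟨by omega⟩
  set J := mfCost P N T c f h γ x0 w v with hJdef
  have hcm : Measurable
      (fun q : (Fin n → ℝ) × (Fin m → ℝ) × (Fin m → ℝ) × (Fin n → ℝ) =>
        c q.1 q.2.1 q.2.2.1 q.2.2.2) := hccont.measurable
  -- all shifted profiles have the same cost as `γ`
  have hshift : ∀ k : Fin N,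
      mfCost P N T c f h (fun i => γ (i + k)) x0 w v = J := by
    intro k
    exact mfCost_perm P N T hcm hfm hhm hγmeas hx0 hw hv hx0exch hwid hvid hindep
      (Equiv.addRight k)
  -- partial averages of shifted profiles
  have key : ∀ k : ℕ,
      (∀ i t, Measurable (fun y =>
        (((k + 1 : ℕ) : ℝ))⁻¹ • ∑ j ∈ Finset.range (k + 1), γ (i + (j : Fin N)) t y)) ∧
      (∀ i t y,
        (((k + 1 : ℕ) : ℝ))⁻¹ • ∑ j ∈ Finset.range (k + 1), γ (i + (j : Fin N)) t y ∈ Uset) ∧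
      mfCost P N T c f h (fun i t y =>
        (((k + 1 : ℕ) : ℝ))⁻¹ • ∑ j ∈ Finset.range (k + 1), γ (i + (j : Fin N)) t y)
        x0 w v ≤ J := by
    intro k
    induction k with
    | zero =>
      have h0 : (fun (i : Fin N) (t : ℕ) (y : Y) =>
          (((0 + 1 : ℕ) : ℝ))⁻¹ • ∑ j ∈ Finset.range (0 + 1), γ (i + (j : Fin N)) t y)
          = γ := by
        funext i t y
        simp
      refine ⟨?_, ?_, ?_⟩
      · intro i t
        have := congrFun (congrFun (congrFun h0 i) t)
        simpa [funext this] using hγmeas i t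
      · intro i t y
        rw [congrFun (congrFun (congrFun h0 i) t) y]
        exact hγmem i t y
      · rw [h0]
    | succ k ih =>
      obtain ⟨ihm, ihmem, ihcost⟩ := ih
      set α : ℝ := ((k : ℝ) + 1) / ((k : ℝ) + 2) with hαdef
      have hα0 : 0 < α := by positivity
      have hα1 : α < 1 := by
        rw [hαdef, div_lt_one (by positivity)]
        linarith
      have h1α : 1 - α = ((k : ℝ) + 2)⁻¹ := by
        rw [hαdef]
        field_simp
        norm_num
      have hmul : α * (((k + 1 : ℕ) : ℝ))⁻¹ = ((k : ℝ) + 2)⁻¹ := by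
        rw [hαdef]
        push_cast
        field_simp
      have hcast : (((k + 1 + 1 : ℕ) : ℝ))⁻¹ = ((k : ℝ) + 2)⁻¹ := by
        push_cast
        ring_nf
      have hcomb : ∀ (i : Fin N) (t : ℕ) (y : Y),
          (((k + 1 + 1 : ℕ) : ℝ))⁻¹ •
              ∑ j ∈ Finset.range (k + 1 + 1), γ (i + (j : Fin N)) t y
            = α • ((((k + 1 : ℕ) : ℝ))⁻¹ •
                ∑ j ∈ Finset.range (k + 1), γ (i + (j : Fin N)) t y)
              + (1 - α) • γ (i + ((k + 1 : ℕ) : Fin N)) t y := by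
        intro i t y
        rw [smul_smul, hmul, h1α, Finset.sum_range_succ, hcast, smul_add]
      refine ⟨?_, ?_, ?_⟩
      · intro i t
        exact (Finset.measurable_sum (Finset.range (k + 1 + 1))
          (fun j _ => hγmeas (i + (j : Fin N)) t)).const_smul
          ((((k + 1 + 1 : ℕ) : ℝ))⁻¹)
      · intro i t y
        rw [hcomb i t y]
        exact hUconv (ihmem i t y) (hγmem (i + ((k + 1 : ℕ) : Fin N)) t y)
          hα0.le (by linarith) (by ring)
      · have hsh : mfCost P N T c f h
            (fun i => γ (i + ((k + 1 : ℕ) : Fin N))) x0 w v = J :=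
          hshift ((k + 1 : ℕ) : Fin N)
        have hbound := hJconv
          (fun i t y => (((k + 1 : ℕ) : ℝ))⁻¹ •
            ∑ j ∈ Finset.range (k + 1), γ (i + (j : Fin N)) t y)
          (fun i => γ (i + ((k + 1 : ℕ) : Fin N)))
          ihm ihmem (fun i t => hγmeas _ t) (fun i t y => hγmem _ t y)
          (ne_top_of_le_ne_top hγfin ihcost) (by rw [hsh]; exact hγfin)
          α ⟨hα0, hα1⟩
        have hprof : (fun (i : Fin N) (t : ℕ) (y : Y) =>
            α • ((((k + 1 : ℕ) : ℝ))⁻¹ •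
              ∑ j ∈ Finset.range (k + 1), γ (i + (j : Fin N)) t y)
            + (1 - α) • γ (i + ((k + 1 : ℕ) : Fin N)) t y)
            = fun (i : Fin N) (t : ℕ) (y : Y) =>
              (((k + 1 + 1 : ℕ) : ℝ))⁻¹ •
                ∑ j ∈ Finset.range (k + 1 + 1), γ (i + (j : Fin N)) t y := by
          funext i t y
          exact (hcomb i t y).symm
        rw [hprof, hsh] at hbound
        refine hbound.trans ?_
        calc ENNReal.ofReal α * mfCost P N T c f h
              (fun i t y => (((k + 1 : ℕ) : ℝ))⁻¹ •
                ∑ j ∈ Finset.range (k + 1), γ (i + (j : Fin N)) t y) x0 w v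
              + ENNReal.ofReal (1 - α) * J
            ≤ ENNReal.ofReal α * J + ENNReal.ofReal (1 - α) * J := by
              gcongr
          _ = J := by
              rw [← add_mul, ← ENNReal.ofReal_add hα0.le (by linarith)]
              have : α + (1 - α) = 1 := by ring
              rw [this, ENNReal.ofReal_one, one_mul]
  obtain ⟨hm, hmem, hcost⟩ := key (N - 1)
  have hN1 : N - 1 + 1 = N := Nat.succ_pred_eq_of_pos hN
  have hsum : ∀ (i : Fin N) (t : ℕ) (y : Y),
      (∑ j ∈ Finset.range N, γ (i + (j : Fin N)) t y) = ∑ j : Fin N, γ j t y := by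
    intro i t y
    rw [← Fin.sum_univ_eq_sum_range (fun j : ℕ => γ (i + (j : Fin N)) t y) N]
    have h1 : (∑ j : Fin N, γ (i + ((j : ℕ) : Fin N)) t y)
        = ∑ j : Fin N, γ (i + j) t y :=
      Fintype.sum_congr _ _ fun j => by rw [Fin.cast_val_eq_self]
    rw [h1]
    exact Equiv.sum_comp (Equiv.addLeft i) (fun p => γ p t y)
  have hprofile : (fun (i : Fin N) (t : ℕ) (y : Y) =>
      (((N - 1 + 1 : ℕ) : ℝ))⁻¹ •
        ∑ j ∈ Finset.range (N - 1 + 1), γ (i + (j : Fin N)) t y)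
      = fun (_ : Fin N) (t : ℕ) (y : Y) =>
          ((N : ℝ))⁻¹ • ∑ j : Fin N, γ j t y := by
    funext i t y
    rw [hN1, hsum i t y]
  refine ⟨fun t y => ((N : ℝ))⁻¹ • ∑ j : Fin N, γ j t y, ?_, ?_, ?_⟩
  · intro t
    exact (Finset.measurable_sum Finset.univ
      (fun j _ => hγmeas j t)).const_smul (((N : ℝ))⁻¹)
  · intro t y
    show ((N : ℝ))⁻¹ • ∑ j : Fin N, γ j t y ∈ Uset
    have := congrFun (congrFun (congrFun hprofile 0) t) y
    rw [← this]
    exact hmem 0 t y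
  · have hgoal : (fun (_ : Fin N) (t : ℕ) (y : Y) =>
        ((N : ℝ))⁻¹ • ∑ j : Fin N, γ j t y)
        = fun (i : Fin N) (t : ℕ) (y : Y) =>
          (((N - 1 + 1 : ℕ) : ℝ))⁻¹ •
            ∑ j ∈ Finset.range (N - 1 + 1), γ (i + (j : Fin N)) t y := hprofile.symm
    show mfCost P N T c f h (fun (_ : Fin N) (t : ℕ) (y : Y) =>
        ((N : ℝ))⁻¹ • ∑ j : Fin N, γ j t y) x0 w v ≤ J
    rw [hgoal]
    exact hcost

end MeanFieldTeam5
end
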